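/- For all x > 0, a > 0, b > 0 with b ≠ x, the integral over t in (0, ∞) of cos(a t) / ((b² + t²)(x² + t²)) dt equals (π / (2 b x)) · (b·e^{-a x} − x·e^{-a b}) / (b² − x²). -/

import Mathlib

open Real MeasureTheory Set Filter Topology
open scoped FourierTransform

private lemma integral_cexp_neg_mul_Ioi' {s : ℂ} (hs : 0 < s.re) :
    ∫ v in Ioi (0:ℝ), Complex.exp (-(s * v)) = 1 / s := by
  have hs0 : s ≠ 0 := fun h => by simp [h] at hs
  have hderiv : ∀ x : ℝ, HasDerivAt (fun v : ℝ => -s⁻¹ * Complex.exp (-(s * v)))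
      (Complex.exp (-(s * x))) x := by
    intro x
    have h1 : HasDerivAt (fun w : ℂ => -(s * w)) (-s) (x : ℂ) := by
      have := ((hasDerivAt_id (x : ℂ)).const_mul s).neg; simp only [mul_one] at this; exact this
    have h2 : HasDerivAt (fun w : ℂ => Complex.exp (-(s * w)))
        (Complex.exp (-(s * (x:ℂ))) * (-s)) (x : ℂ) :=
      (Complex.hasDerivAt_exp _).comp _ h1
    have h3 := (h2.const_mul (-s⁻¹)).comp_ofReal
    convert h3 using 1
    field_simp
  have hint : IntegrableOn (fun v : ℝ => Complex.exp (-(s * v))) (Ioi 0) := by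
    apply Integrable.mono' (exp_neg_integrableOn_Ioi 0 hs)
    · exact (Complex.continuous_exp.comp
        ((continuous_const.mul Complex.continuous_ofReal).neg)).aestronglyMeasurable
    · filter_upwards with v
      simp [Complex.norm_exp]
  have htend : Tendsto (fun v : ℝ => -s⁻¹ * Complex.exp (-(s * v))) atTop (𝓝 0) := by
    rw [tendsto_zero_iff_norm_tendsto_zero]
    have heq : (fun v : ℝ => ‖-s⁻¹ * Complex.exp (-(s * v))‖)
        = fun v : ℝ => ‖s⁻¹‖ * Real.exp (-(s.re * v)) := by
      funext v
      simp [Complex.norm_exp]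
    rw [heq, show (0:ℝ) = ‖s⁻¹‖ * 0 by ring]
    apply Tendsto.const_mul
    have h4 : Tendsto (fun v : ℝ => -(s.re * v)) atTop atBot :=
      tendsto_neg_atTop_atBot.comp (tendsto_id.const_mul_atTop hs)
    exact Real.tendsto_exp_atBot.comp h4
  have h := integral_Ioi_of_hasDerivAt_of_tendsto' (fun x _ => hderiv x) hint htend
  rw [h]
  simp [hs0, one_div]

private lemma integrable_exp_neg_abs' {c : ℝ} (hc : 0 < c) :
    Integrable (fun v : ℝ => Real.exp (-c * |v|)) := by
  have h1 : IntegrableOn (fun v : ℝ => Real.exp (-c * |v|)) (Ioi 0) := by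
    apply (exp_neg_integrableOn_Ioi 0 hc).congr_fun _ measurableSet_Ioi
    intro v hv
    simp [abs_of_pos (show (0:ℝ) < v from hv)]
  have h2 : IntegrableOn (fun v : ℝ => Real.exp (-c * |v|)) (Iic 0) := by
    rw [IntegrableOn, ← Measure.map_neg_eq_self (volume : Measure ℝ)]
    have m : MeasurableEmbedding fun x : ℝ => -x := (Homeomorph.neg ℝ).measurableEmbedding
    rw [m.restrict_map, integrable_map_measure
      (Continuous.aestronglyMeasurable (by fun_prop))
      m.measurable.aemeasurable]
    simp_rw [Function.comp_def, abs_neg, neg_preimage, neg_Iic, neg_zero]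
    exact (integrableOn_Ici_iff_integrableOn_Ioi).mpr h1
  rw [← integrableOn_univ, ← Set.Iic_union_Ioi (a := (0:ℝ))]
  exact h2.union h1

private lemma fourierExpAbs {c : ℝ} (hc : 0 < c) (w : ℝ) :
    𝓕 (fun x : ℝ => (Real.exp (-c * |x|) : ℂ)) w
      = ((2 * c / (c ^ 2 + 4 * π ^ 2 * w ^ 2) : ℝ) : ℂ) := by
  set s₁ : ℂ := (c : ℂ) + 2 * (π : ℂ) * w * Complex.I with hs₁def
  set s₂ : ℂ := (c : ℂ) - 2 * (π : ℂ) * w * Complex.I with hs₂def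
  have hs₁ : 0 < s₁.re := by simp [hs₁def, hc]
  have hs₂ : 0 < s₂.re := by simp [hs₂def, hc]
  have hs₁0 : s₁ ≠ 0 := fun h => by simp [h] at hs₁
  have hs₂0 : s₂ ≠ 0 := fun h => by simp [h] at hs₂
  set F : ℝ → ℂ := fun v => Complex.exp ((-2 * π * v * w : ℝ) * Complex.I)
      * (Real.exp (-c * |v|) : ℂ) with hFdef
  have hFint : Integrable F := by
    apply Integrable.mono' (integrable_exp_neg_abs' hc)
    · apply Continuous.aestronglyMeasurable
      fun_prop
    · filter_upwards with v
      simp [hFdef, Complex.norm_exp, abs_of_pos (Real.exp_pos _)]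
  have hIoi : ∫ v in Ioi (0:ℝ), F v = 1 / s₁ := by
    rw [← integral_cexp_neg_mul_Ioi' hs₁]
    apply setIntegral_congr_fun measurableSet_Ioi
    intro v hv
    rw [hFdef]
    simp only
    rw [abs_of_pos hv, Complex.ofReal_exp, ← Complex.exp_add]
    congr 1
    rw [hs₁def]
    push_cast
    ring
  have hIic : ∫ v in Iic (0:ℝ), F v = 1 / s₂ := by
    have hcomp := integral_comp_neg_Iic (0:ℝ) (fun x => F (-x))
    simp only [neg_neg, neg_zero] at hcomp
    rw [hcomp, ← integral_cexp_neg_mul_Ioi' hs₂]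
    apply setIntegral_congr_fun measurableSet_Ioi
    intro v hv
    rw [hFdef]
    simp only
    rw [abs_neg, abs_of_pos hv, Complex.ofReal_exp, ← Complex.exp_add]
    congr 1
    rw [hs₂def]
    push_cast
    ring
  have hsplit : 𝓕 (fun x : ℝ => (Real.exp (-c * |x|) : ℂ)) w = 1 / s₂ + 1 / s₁ := by
    rw [Real.fourier_real_eq_integral_exp_smul]
    simp_rw [smul_eq_mul]
    rw [← hIic, ← hIoi, ← intervalIntegral.integral_Iic_add_Ioi hFint.integrableOn hFint.integrableOn]
  rw [hsplit]
  have hmul : s₂ * s₁ = ((c ^ 2 + 4 * π ^ 2 * w ^ 2 : ℝ) : ℂ) := by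
    rw [hs₁def, hs₂def]
    push_cast
    linear_combination (-4 * (π:ℂ) ^ 2 * (w:ℂ) ^ 2) * Complex.I_sq
  rw [div_add_div _ _ hs₂0 hs₁0, hmul]
  rw [one_mul, mul_one]
  rw [show s₁ + s₂ = ((2 * c : ℝ) : ℂ) by rw [hs₁def, hs₂def]; push_cast; ring]
  rw [← Complex.ofReal_div]

private lemma integrableFT {c : ℝ} (hc : 0 < c) :
    Integrable (fun w : ℝ => 2 * c / (c ^ 2 + 4 * π ^ 2 * w ^ 2)) := by
  have hR : (2 * π / c) ≠ 0 := by positivity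
  have h1 : Integrable (fun w : ℝ => (1 + (2 * π / c * w) ^ 2)⁻¹) :=
    (integrable_comp_mul_left_iff (fun x : ℝ => (1 + x ^ 2)⁻¹) hR).mpr
      integrable_inv_one_add_sq
  apply (h1.const_mul (2 / c)).congr
  filter_upwards with w
  have h2 : c ^ 2 + 4 * π ^ 2 * w ^ 2 > 0 := by positivity
  have h3 : 1 + (2 * π / c * w) ^ 2 > 0 := by positivity
  field_simp
  ring

private lemma integral_cos_real {a c : ℝ} (ha : 0 < a) (hc : 0 < c) :
    ∫ t : ℝ, Real.cos (a * t) / (c ^ 2 + t ^ 2) = π / c * Real.exp (-a * c) := by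
  set f : ℝ → ℂ := fun x => (Real.exp (-c * |x|) : ℂ) with hfdef
  have hfc : Continuous f := by fun_prop
  have hfi : Integrable f := (integrable_exp_neg_abs' hc).ofReal
  have hFT : 𝓕 f = fun w : ℝ => ((2 * c / (c ^ 2 + 4 * π ^ 2 * w ^ 2) : ℝ) : ℂ) :=
    funext (fourierExpAbs hc)
  have hFTi : Integrable (𝓕 f) := by rw [hFT]; exact (integrableFT hc).ofReal
  have hinv : 𝓕⁻ (𝓕 f) a = f a := congrFun (hfc.fourierInv_fourier_eq hfi hFTi) a
  rw [Real.fourierInv_eq_fourier_neg, hFT,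
    Real.fourier_real_eq_integral_exp_smul] at hinv
  simp_rw [smul_eq_mul] at hinv
  -- take real parts
  have hint2 : Integrable (fun v : ℝ => Complex.exp ((-2 * π * v * -a : ℝ) * Complex.I)
      * ((2 * c / (c ^ 2 + 4 * π ^ 2 * v ^ 2) : ℝ) : ℂ)) := by
    apply Integrable.mono' (integrableFT hc).norm
    · apply Continuous.aestronglyMeasurable
      apply Continuous.mul
      · fun_prop
      · apply Complex.continuous_ofReal.comp
        apply Continuous.div continuous_const (by fun_prop)
        intro v
        positivity
    · filter_upwards with v
      rw [norm_mul, Complex.norm_exp_ofReal_mul_I, one_mul, Complex.norm_real]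
  have hre : Real.exp (-c * a)
      = ∫ v : ℝ, Real.cos (2 * π * v * a) * (2 * c / (c ^ 2 + 4 * π ^ 2 * v ^ 2)) := by
    have h0 : Real.exp (-c * a) = (f a).re := by
      show Real.exp (-c * a) = ((Real.exp (-c * |a|) : ℝ) : ℂ).re
      rw [abs_of_pos ha, Complex.ofReal_re]
    calc Real.exp (-c * a) = (f a).re := h0
      _ = (∫ v : ℝ, Complex.exp ((-2 * π * v * -a : ℝ) * Complex.I)
            * ((2 * c / (c ^ 2 + 4 * π ^ 2 * v ^ 2) : ℝ) : ℂ)).re := by rw [hinv]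
      _ = ∫ v : ℝ, (Complex.exp ((-2 * π * v * -a : ℝ) * Complex.I)
            * ((2 * c / (c ^ 2 + 4 * π ^ 2 * v ^ 2) : ℝ) : ℂ)).re :=
          (Complex.reCLM.integral_comp_comm hint2).symm
      _ = ∫ v : ℝ, Real.cos (2 * π * v * a) * (2 * c / (c ^ 2 + 4 * π ^ 2 * v ^ 2)) := by
          apply integral_congr_ae
          filter_upwards with v
          have hθ : (-2 * π * v * -a : ℝ) = 2 * π * v * a := by ring
          rw [hθ]
          rw [Complex.mul_re, Complex.exp_ofReal_mul_I_re, Complex.exp_ofReal_mul_I_im,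
            Complex.ofReal_re, Complex.ofReal_im, mul_zero, sub_zero]
  set g : ℝ → ℝ := fun t => Real.cos (a * t) / (c ^ 2 + t ^ 2) with hgdef
  have h4 : ∫ v : ℝ, g (2 * π * v) = (2 * π)⁻¹ * ∫ t : ℝ, g t := by
    rw [Measure.integral_comp_mul_left g (2 * π), smul_eq_mul,
      abs_of_pos (by positivity : (0:ℝ) < (2*π)⁻¹)]
  have h5 : ∫ v : ℝ, Real.cos (2 * π * v * a) * (2 * c / (c ^ 2 + 4 * π ^ 2 * v ^ 2))
      = 2 * c * ∫ v : ℝ, g (2 * π * v) := by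
    rw [← integral_const_mul]
    apply integral_congr_ae
    filter_upwards with v
    rw [hgdef]
    simp only
    rw [show a * (2 * π * v) = 2 * π * v * a by ring]
    have h2 : c ^ 2 + 4 * π ^ 2 * v ^ 2 > 0 := by positivity
    have h3 : c ^ 2 + (2 * π * v) ^ 2 = c ^ 2 + 4 * π ^ 2 * v ^ 2 := by ring
    rw [h3]
    ring
  rw [h5, h4] at hre
  have hπ : (0:ℝ) < π := Real.pi_pos
  show ∫ t : ℝ, g t = π / c * Real.exp (-a * c)
  rw [div_mul_eq_mul_div, eq_div_iff hc.ne']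
  rw [show -a * c = -c * a by ring, hre]
  field_simp

private lemma integral_cos_Ioi {a c : ℝ} (ha : 0 < a) (hc : 0 < c) :
    ∫ t in Set.Ioi (0:ℝ), Real.cos (a * t) / (c ^ 2 + t ^ 2)
      = π / (2 * c) * Real.exp (-a * c) := by
  have h2 : ∫ t : ℝ, Real.cos (a * t) / (c ^ 2 + t ^ 2)
      = 2 * ∫ t in Ioi (0:ℝ), Real.cos (a * t) / (c ^ 2 + t ^ 2) := by
    rw [← integral_comp_abs (f := fun t => Real.cos (a * t) / (c ^ 2 + t ^ 2))]
    apply integral_congr_ae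
    filter_upwards with t
    rcases abs_choice t with h | h
    · rw [h]
    · rw [h, mul_neg, Real.cos_neg, neg_pow, show ((-1:ℝ))^2 = 1 by norm_num, one_mul]
  rw [integral_cos_real ha hc] at h2
  have hc' : c ≠ 0 := hc.ne'
  field_simp at h2 ⊢
  linarith

private lemma integrable_inv_sq_add {c : ℝ} (hc : 0 < c) :
    Integrable (fun t : ℝ => (c ^ 2 + t ^ 2)⁻¹) := by
  have h1 : Integrable (fun t : ℝ => (1 + (c⁻¹ * t) ^ 2)⁻¹) :=
    (integrable_comp_mul_left_iff (fun x : ℝ => (1 + x ^ 2)⁻¹)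
      (inv_ne_zero hc.ne')).mpr integrable_inv_one_add_sq
  apply (h1.const_mul (c ^ 2)⁻¹).congr
  filter_upwards with t
  have h2 : c ^ 2 + t ^ 2 > 0 := by positivity
  have h3 : 1 + (c⁻¹ * t) ^ 2 > 0 := by positivity
  field_simp

private lemma integrableOn_cos_div {a c : ℝ} (hc : 0 < c) :
    IntegrableOn (fun t : ℝ => Real.cos (a * t) / (c ^ 2 + t ^ 2)) (Ioi 0) := by
  apply Integrable.mono' (integrable_inv_sq_add hc).integrableOn
  · apply Continuous.aestronglyMeasurable
    apply Continuous.div (by fun_prop) (by fun_prop)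
    intro t
    positivity
  · filter_upwards with t
    have hX : (0:ℝ) < c ^ 2 + t ^ 2 := by positivity
    rw [Real.norm_eq_abs, abs_div, abs_of_pos hX, ← one_div (c ^ 2 + t ^ 2),
      div_le_div_iff₀ hX hX, one_mul]
    calc |Real.cos (a * t)| * (c ^ 2 + t ^ 2) ≤ 1 * (c ^ 2 + t ^ 2) := by
          apply mul_le_mul_of_nonneg_right (Real.abs_cos_le_one _) hX.le
      _ = c ^ 2 + t ^ 2 := one_mul _

theorem cos_two_quadratics (a b x : ℝ) (hx : 0 < x) (ha : 0 < a) (hb : 0 < b) (hbx : b ≠ x) :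
    ∫ t in Set.Ioi (0:ℝ), Real.cos (a * t) / ((b ^ 2 + t ^ 2) * (x ^ 2 + t ^ 2))
      = (Real.pi / (2 * b * x)) *
        ((b * Real.exp (-a * x) - x * Real.exp (-a * b)) / (b ^ 2 - x ^ 2)) := by
  have hbx2 : b ^ 2 - x ^ 2 ≠ 0 := by
    intro h
    have h1 : (b - x) * (b + x) = 0 := by linear_combination h
    rcases mul_eq_zero.mp h1 with h2 | h2
    · exact hbx (by linarith)
    · linarith
  have hsplit : ∀ t ∈ Ioi (0:ℝ), Real.cos (a * t) / ((b ^ 2 + t ^ 2) * (x ^ 2 + t ^ 2))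
      = (b ^ 2 - x ^ 2)⁻¹ * (Real.cos (a * t) / (x ^ 2 + t ^ 2))
        - (b ^ 2 - x ^ 2)⁻¹ * (Real.cos (a * t) / (b ^ 2 + t ^ 2)) := by
    intro t _
    have h1 : (0:ℝ) < b ^ 2 + t ^ 2 := by positivity
    have h2 : (0:ℝ) < x ^ 2 + t ^ 2 := by positivity
    field_simp
    ring
  rw [setIntegral_congr_fun measurableSet_Ioi hsplit,
    integral_sub ((integrableOn_cos_div hx).const_mul _)
      ((integrableOn_cos_div hb).const_mul _),
    integral_const_mul, integral_const_mul, integral_cos_Ioi ha hx, integral_cos_Ioi ha hb]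
  field_simp
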